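/- Let A be a commutative ring, I ⊆ A a finitely generated ideal, and suppose A is derived I-complete as a module over itself. Let M be a derived I-complete A-module. Then the following are equivalent: (1) M is finitely generated outside I, i.e. for every t ∈ I the localization M[1/t] is a finitely generated A[1/t]-module; (2) there exists r ≥ 1 such that M is ≤I^r-finitely generated; (3) there exists r ≥ 1 such that for all n ≥ 1, M/I^n M is ≤I^r-finitely generated. Moreover, for each fixed r ≥ 1, condition (2) holds with exponent r if and only if condition (3) holds with exponent r. -/

import Mathlib

universe u v

def derivedCompletionPhi {A : Type u} [CommRing A] (x : A) (M : Type v) [AddCommGroup M]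
    [Module A M] : (ℕ → M) → (ℕ → M) :=
  fun m n => m n - x • m (n + 1)

def IsDerivedComplete {A : Type u} [CommRing A] (x : A) (M : Type v) [AddCommGroup M]
    [Module A M] : Prop :=
  Function.Bijective (derivedCompletionPhi x M)

def IsLeqFinitelyGenerated {A : Type u} [CommRing A] (J : Ideal A) (M : Type v)
    [AddCommGroup M] [Module A M] : Prop :=
  ∀ a ∈ J, ∃ (F : Type v) (_ : AddCommGroup F) (_ : Module A F), Module.Finite A F ∧
    ∃ (f : M →ₗ[A] F) (g : F →ₗ[A] M), g ∘ₗ f = a • (LinearMap.id : M →ₗ[A] M)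

section Infra

variable {A : Type u} [CommRing A] (x : A)

/-- Φ commutes with postcomposition by a linear map. -/
theorem DC.phi_comp {X : Type v} {Y : Type*} [AddCommGroup X] [Module A X]
    [AddCommGroup Y] [Module A Y] (ψ : X →ₗ[A] Y) (m : ℕ → X) :
    derivedCompletionPhi x Y (fun n => ψ (m n)) = fun n => ψ (derivedCompletionPhi x X m n) := by
  funext n
  simp [derivedCompletionPhi, map_sub, map_smul]

theorem DC.phi_smul {X : Type v} [AddCommGroup X] [Module A X] (a : A) (m : ℕ → X) :
    derivedCompletionPhi x X (fun n => a • m n) = fun n => a • derivedCompletionPhi x X m n := by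
  funext n
  simp [derivedCompletionPhi, smul_sub, smul_comm a x]

theorem DC.phi_sub {X : Type v} [AddCommGroup X] [Module A X] (m m' : ℕ → X) :
    derivedCompletionPhi x X (fun n => m n - m' n)
      = fun n => derivedCompletionPhi x X m n - derivedCompletionPhi x X m' n := by
  funext n
  simp only [derivedCompletionPhi, smul_sub]
  abel

theorem DC.phi_zero {X : Type v} [AddCommGroup X] [Module A X] :
    derivedCompletionPhi x X (fun _ => (0 : X)) = fun _ => (0 : X) := by
  funext n; simp [derivedCompletionPhi]

/-- Injectivity of Φ gives: a Φ-preimage of 0 is 0 even stated pointwise. -/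
theorem DC.eq_of_phi_eq {X : Type v} [AddCommGroup X] [Module A X]
    (hinj : Function.Injective (derivedCompletionPhi x X)) {m m' : ℕ → X}
    (h : ∀ n, derivedCompletionPhi x X m n = derivedCompletionPhi x X m' n) : m = m' := by
  apply hinj
  funext n; exact h n

/-- Surjectivity of Φ passes to quotients. -/
theorem DC.phi_surj_quotient {X : Type v} [AddCommGroup X] [Module A X]
    (hs : Function.Surjective (derivedCompletionPhi x X)) (W : Submodule A X) :
    Function.Surjective (derivedCompletionPhi x (X ⧸ W)) := by
  intro q
  choose m hm using fun n => Submodule.Quotient.mk_surjective W (q n)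
  obtain ⟨y, hy⟩ := hs m
  refine ⟨fun n => Submodule.Quotient.mk (y n), ?_⟩
  funext n
  have : derivedCompletionPhi x (X ⧸ W) (fun n => Submodule.Quotient.mk (y n)) n
      = Submodule.Quotient.mk (p := W) (derivedCompletionPhi x X y n) := by
    simp [derivedCompletionPhi, Submodule.Quotient.mk_sub, Submodule.Quotient.mk_smul]
  rw [this, hy, hm]

/-- Key stability: if `Φ y` lands in the range of `φ` (with derived complete source), so does `y`. -/
theorem DC.range_stable {X' : Type*} {X : Type v} [AddCommGroup X'] [Module A X']
    [AddCommGroup X] [Module A X] (φ : X' →ₗ[A] X)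
    (hs : Function.Surjective (derivedCompletionPhi x X'))
    (hi : Function.Injective (derivedCompletionPhi x X))
    (y : ℕ → X) (h : ∀ n, derivedCompletionPhi x X y n ∈ LinearMap.range φ) :
    ∀ n, y n ∈ LinearMap.range φ := by
  choose m' hm' using h
  obtain ⟨z, hz⟩ := hs m'
  have key : derivedCompletionPhi x X (fun n => φ (z n)) = derivedCompletionPhi x X y := by
    rw [DC.phi_comp]
    funext n
    rw [show derivedCompletionPhi x X' z n = m' n from congrFun hz n]
    exact hm' n
  have : (fun n => φ (z n)) = y := hi key
  intro n
  exact this ▸ ⟨z n, rfl⟩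

end Infra

section Infra2

variable {A : Type u} [CommRing A] {x : A}

/-- Quotient by the range of a map with derived complete source is derived complete. -/
theorem DC.quotient_range {X' : Type*} {X : Type v} [AddCommGroup X'] [Module A X']
    [AddCommGroup X] [Module A X] (φ : X' →ₗ[A] X)
    (hX' : Function.Surjective (derivedCompletionPhi x X'))
    (hX : IsDerivedComplete x X) :
    IsDerivedComplete x (X ⧸ LinearMap.range φ) := by
  constructor
  · -- injective
    intro q q' hqq'
    have hW := Submodule.Quotient.mk_surjective (LinearMap.range φ)
    choose m hm using fun n => hW (q n)
    choose m' hm' using fun n => hW (q' n)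
    have hmem : ∀ n, derivedCompletionPhi x X (fun k => m k - m' k) n ∈ LinearMap.range φ := by
      intro n
      rw [DC.phi_sub]
      have : Submodule.Quotient.mk (p := LinearMap.range φ)
          (derivedCompletionPhi x X m n - derivedCompletionPhi x X m' n) = 0 := by
        rw [Submodule.Quotient.mk_sub]
        have h1 : Submodule.Quotient.mk (p := LinearMap.range φ) (derivedCompletionPhi x X m n)
            = derivedCompletionPhi x (X ⧸ LinearMap.range φ) q n := by
          simp only [derivedCompletionPhi, Submodule.Quotient.mk_sub,
            Submodule.Quotient.mk_smul, hm]
        have h2 : Submodule.Quotient.mk (p := LinearMap.range φ) (derivedCompletionPhi x X m' n)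
            = derivedCompletionPhi x (X ⧸ LinearMap.range φ) q' n := by
          simp only [derivedCompletionPhi, Submodule.Quotient.mk_sub,
            Submodule.Quotient.mk_smul, hm']
        rw [h1, h2, hqq']
        simp
      exact (Submodule.Quotient.mk_eq_zero _).mp this
    have := DC.range_stable x φ hX' hX.1 _ hmem
    funext n
    have hn := this n
    have : Submodule.Quotient.mk (p := LinearMap.range φ) (m n - m' n) = 0 :=
      (Submodule.Quotient.mk_eq_zero _).mpr hn
    rw [Submodule.Quotient.mk_sub, sub_eq_zero] at this
    rw [← hm n, ← hm' n, this]
  · exact DC.phi_surj_quotient x hX.2 _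

/-- Pi types of derived complete modules are derived complete. -/
theorem DC.pi {ι : Type*} {X : Type v} [AddCommGroup X] [Module A X]
    (hX : IsDerivedComplete x X) : IsDerivedComplete x (ι → X) := by
  constructor
  · intro Y Y' h
    funext n i
    have : (fun n => Y n i) = fun n => Y' n i := by
      apply hX.1
      funext n
      have := congrFun (congrFun h n) i
      simpa [derivedCompletionPhi] using this
    exact congrFun this n
  · intro C
    choose y hy using fun i => hX.2 (fun n => C n i)
    refine ⟨fun n i => y i n, ?_⟩
    funext n i
    have := congrFun (hy i) n
    simpa [derivedCompletionPhi] using this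

/-- A module killed by `x ^ c` is derived `x`-complete. -/
theorem DC.of_bounded {X : Type v} [AddCommGroup X] [Module A X] (c : ℕ)
    (h : ∀ m : X, x ^ c • m = 0) : IsDerivedComplete x X := by
  have key : ∀ m : ℕ → X, ∀ n : ℕ,
      (Finset.range c).sum (fun k => x ^ k • derivedCompletionPhi x X m (n + k)) = m n := by
    intro m n
    have : ∀ k, x ^ k • derivedCompletionPhi x X m (n + k)
        = x ^ k • m (n + k) - x ^ (k+1) • m (n + (k+1)) := by
      intro k
      simp only [derivedCompletionPhi, smul_sub, smul_smul]
      rw [← pow_succ, show n + k + 1 = n + (k + 1) by ring]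
    rw [Finset.sum_congr rfl (fun k _ => this k), Finset.sum_range_sub']
    simp [h (m (n + c))]
  constructor
  · intro m m' hmm'
    funext n
    have := key m n
    rw [hmm'] at this
    rw [← this, key m' n]
  · intro C
    refine ⟨fun n => (Finset.range c).sum (fun k => x ^ k • C (n + k)), ?_⟩
    funext n
    show (Finset.range c).sum (fun k => x ^ k • C (n + k))
        - x • (Finset.range c).sum (fun k => x ^ k • C (n + 1 + k)) = C n
    rw [Finset.smul_sum]
    have : ∀ k ∈ Finset.range c, x • x ^ k • C (n + 1 + k) = x ^ (k+1) • C (n + (k+1)) := by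
      intro k _
      rw [smul_smul, ← pow_succ']
      congr 1
      ring
    rw [Finset.sum_congr rfl this]
    have tele : (Finset.range c).sum (fun k => x ^ k • C (n + k))
        - (Finset.range c).sum (fun k => x ^ (k+1) • C (n + (k+1)))
        = x ^ 0 • C (n + 0) - x ^ c • C (n + c) := by
      rw [← Finset.sum_sub_distrib, Finset.sum_range_sub' (fun k => x ^ k • C (n + k))]
    rw [tele, h (C (n + c))]
    simp

/-- Kernel of the quotient map: a submodule is derived complete when the ambient module is and
the quotient has injective Φ. -/
theorem DC.submodule {X : Type v} [AddCommGroup X] [Module A X]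
    (hX : IsDerivedComplete x X) (W : Submodule A X)
    (hq : Function.Injective (derivedCompletionPhi x (X ⧸ W))) :
    IsDerivedComplete x ↥W := by
  constructor
  · intro m m' h
    funext n
    ext
    have : (fun n => ((m n : X))) = fun n => ((m' n : X)) := by
      apply hX.1
      funext k
      have := congrFun h k
      have h2 : ∀ (mm : ℕ → ↥W) (k : ℕ), derivedCompletionPhi x X (fun j => (mm j : X)) k
          = ((derivedCompletionPhi x ↥W mm k : ↥W) : X) := by
        intro mm k; simp [derivedCompletionPhi]
      rw [h2 m k, h2 m' k, this]
    exact congrFun this n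
  · intro w
    obtain ⟨y, hy⟩ := hX.2 (fun n => (w n : X))
    have hmk : derivedCompletionPhi x (X ⧸ W) (fun n => Submodule.Quotient.mk (y n)) =
        fun _ => (0 : X ⧸ W) := by
      funext n
      have : derivedCompletionPhi x (X ⧸ W) (fun n => Submodule.Quotient.mk (y n)) n
          = Submodule.Quotient.mk (p := W) (derivedCompletionPhi x X y n) := by
        simp [derivedCompletionPhi, Submodule.Quotient.mk_sub, Submodule.Quotient.mk_smul]
      rw [this, hy]
      exact (Submodule.Quotient.mk_eq_zero _).mpr (w n).2
    have : (fun n => Submodule.Quotient.mk (p := W) (y n)) = fun _ => (0 : X ⧸ W) := by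
      apply hq
      rw [hmk, DC.phi_zero]
    have hyW : ∀ n, y n ∈ W := by
      intro n
      exact (Submodule.Quotient.mk_eq_zero _).mp (congrFun this n)
    refine ⟨fun n => ⟨y n, hyW n⟩, ?_⟩
    funext n
    ext
    have := congrFun hy n
    simpa [derivedCompletionPhi] using this

/-- Nakayama for a principal element: derived complete + divisible implies zero. -/
theorem DC.nakayama_principal {X : Type v} [AddCommGroup X] [Module A X]
    (hi : Function.Injective (derivedCompletionPhi x X))
    (hdiv : ∀ m : X, ∃ m', m = x • m') : ∀ m : X, m = 0 := by
  intro m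
  choose d hd using hdiv
  let s : ℕ → X := fun n => d^[n] m
  have hs : ∀ n, s n = x • s (n+1) := by
    intro n
    show d^[n] m = x • d^[n+1] m
    rw [Function.iterate_succ_apply']
    exact hd (d^[n] m)
  have : s = fun _ => 0 := by
    apply hi
    funext n
    simp [derivedCompletionPhi, ← hs n, DC.phi_zero]
  exact congrFun this 0

end Infra2

section Infra3

variable {A : Type u} [CommRing A]

/-- Nakayama for a finitely generated ideal given by a list of generators. -/
theorem DC.nakayama_list (L : List A) {X : Type v} [AddCommGroup X] [Module A X]
    (hX : ∀ t ∈ L, IsDerivedComplete t X)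
    (htop : (⊤ : Submodule A X) ≤ (Ideal.span {a | a ∈ L}) • ⊤) : ∀ m : X, m = 0 := by
  induction L generalizing X with
  | nil =>
    intro m
    have : m ∈ (Ideal.span {a : A | a ∈ ([] : List A)}) • (⊤ : Submodule A X) :=
      htop Submodule.mem_top
    have hset : {a : A | a ∈ ([] : List A)} = (∅ : Set A) := by
      ext a; simp
    rw [hset, Ideal.span_empty, Submodule.bot_smul] at this
    simpa using this
  | cons t L' ih =>
    -- quotient by range of (t • id)
    set φ : X →ₗ[A] X := t • LinearMap.id with hφ
    set Y := X ⧸ LinearMap.range φ with hY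
    have hXt : IsDerivedComplete t X := hX t List.mem_cons_self
    have hYdc : ∀ s ∈ L', IsDerivedComplete s Y := by
      intro s hs
      exact DC.quotient_range φ (hX s (List.mem_cons_of_mem t hs)).2
        (hX s (List.mem_cons_of_mem t hs))
    have hYtop : (⊤ : Submodule A Y) ≤ (Ideal.span {a | a ∈ L'}) • ⊤ := by
      intro q _
      obtain ⟨m, rfl⟩ := Submodule.Quotient.mk_surjective _ q
      have hm : m ∈ (Ideal.span {a | a ∈ t :: L'}) • (⊤ : Submodule A X) :=
        htop Submodule.mem_top
      have hsplit : Ideal.span {a : A | a ∈ t :: L'}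
          = Ideal.span {t} ⊔ Ideal.span {a | a ∈ L'} := by
        rw [← Ideal.span_union]
        congr 1
        ext a; simp
      rw [hsplit, Submodule.sup_smul] at hm
      obtain ⟨y, hy, z, hz, hyz⟩ := Submodule.mem_sup.mp hm
      have hyr : y ∈ LinearMap.range φ := by
        have : Ideal.span {t} • (⊤ : Submodule A X) ≤ LinearMap.range φ := by
          rw [Submodule.smul_le]
          intro r hr n _
          obtain ⟨a, ha⟩ := Ideal.mem_span_singleton'.mp hr
          refine ⟨a • n, ?_⟩
          rw [hφ]
          simp [LinearMap.smul_apply, smul_smul, ← ha, mul_comm]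
        exact this hy
      have : Submodule.Quotient.mk (p := LinearMap.range φ) m
          = Submodule.Quotient.mk z := by
        rw [← hyz, Submodule.Quotient.mk_add, (Submodule.Quotient.mk_eq_zero _).mpr hyr,
          zero_add]
      rw [this]
      have : Submodule.Quotient.mk (p := LinearMap.range φ) z
          ∈ Submodule.map (LinearMap.range φ).mkQ ((Ideal.span {a | a ∈ L'}) • ⊤) :=
        ⟨z, hz, rfl⟩
      rw [Submodule.map_smul''] at this
      exact (smul_mono_right (Ideal.span {a | a ∈ L'}) (le_top : Submodule.map (LinearMap.range φ).mkQ ⊤ ≤ (⊤ : Submodule A Y))) this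
    have hYzero := ih hYdc hYtop
    have hdiv : ∀ m : X, ∃ m', m = t • m' := by
      intro m
      have : Submodule.Quotient.mk (p := LinearMap.range φ) m = 0 := hYzero _
      obtain ⟨m', hm'⟩ := (Submodule.Quotient.mk_eq_zero _).mp this
      exact ⟨m', by simpa [hφ] using hm'.symm⟩
    exact DC.nakayama_principal hXt.1 hdiv

/-- Quotient by a finitely generated submodule is derived complete (over a derived complete
ring). -/
theorem DC.quotient_fg {x : A} (hA : IsDerivedComplete x A) {X : Type v} [AddCommGroup X]
    [Module A X] (hX : IsDerivedComplete x X) (N : Submodule A X) (hN : N.FG) :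
    IsDerivedComplete x (X ⧸ N) := by
  obtain ⟨s, v, hv⟩ := Submodule.fg_iff_exists_fin_generating_family.mp hN
  have hrange : LinearMap.range (Fintype.linearCombination A v) = N := by
    rw [Fintype.range_linearCombination]
    exact hv
  have : IsDerivedComplete x (X ⧸ LinearMap.range (Fintype.linearCombination A v)) :=
    DC.quotient_range _ (DC.pi (ι := Fin s) hA).2 hX
  rwa [hrange] at this

end Infra3

section Torsion

variable {A : Type u} [CommRing A]

/-- Quotient by the kernel of multiplication by `x ^ c` is derived complete. -/
theorem DC.quotient_torsionKer {x : A} (c : ℕ) {X : Type v} [AddCommGroup X] [Module A X]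
    (hX : IsDerivedComplete x X) :
    IsDerivedComplete x (X ⧸ (LinearMap.ker ((x ^ c) • (LinearMap.id : X →ₗ[A] X)))) := by
  set K := LinearMap.ker ((x ^ c) • (LinearMap.id : X →ₗ[A] X)) with hK
  have hKmem : ∀ z : X, z ∈ K ↔ x ^ c • z = 0 := by
    intro z; simp [hK]
  constructor
  · intro q q' hqq'
    have hW := Submodule.Quotient.mk_surjective K
    choose m hm using fun n => hW (q n)
    choose m' hm' using fun n => hW (q' n)
    have hz : (fun k => x ^ c • (m k - m' k)) = fun _ => (0 : X) := by
      apply hX.1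
      funext n
      rw [DC.phi_smul, DC.phi_sub, DC.phi_zero]
      have : derivedCompletionPhi x X m n - derivedCompletionPhi x X m' n ∈ K := by
        rw [← Submodule.Quotient.mk_eq_zero K, Submodule.Quotient.mk_sub]
        have h1 : Submodule.Quotient.mk (p := K) (derivedCompletionPhi x X m n)
            = derivedCompletionPhi x (X ⧸ K) q n := by
          simp only [derivedCompletionPhi, Submodule.Quotient.mk_sub,
            Submodule.Quotient.mk_smul, hm]
        have h2 : Submodule.Quotient.mk (p := K) (derivedCompletionPhi x X m' n)
            = derivedCompletionPhi x (X ⧸ K) q' n := by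
          simp only [derivedCompletionPhi, Submodule.Quotient.mk_sub,
            Submodule.Quotient.mk_smul, hm']
        rw [h1, h2, hqq']
        simp
      exact (hKmem _).mp this
    funext n
    rw [← hm n, ← hm' n]
    rw [← sub_eq_zero, ← Submodule.Quotient.mk_sub, Submodule.Quotient.mk_eq_zero]
    rw [hKmem]
    exact congrFun hz n
  · exact DC.phi_surj_quotient x hX.2 _

/-- A derived complete module all of whose elements are `x`-power torsion has bounded torsion. -/
theorem DC.torsion_bounded {x : A} {X : Type v} [AddCommGroup X] [Module A X]
    (hX : IsDerivedComplete x X) (htor : ∀ m : X, ∃ n, x ^ n • m = 0) :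
    ∃ c, ∀ m : X, x ^ c • m = 0 := by
  classical
  by_cases h1 : ∃ c n : ℕ, ∀ m : X, ∃ u : X, x ^ c • (x ^ n • m - x ^ (n+1) • u) = 0
  · -- bounded case via Nakayama
    obtain ⟨c, n, hcn⟩ := h1
    set K := LinearMap.ker ((x ^ c) • (LinearMap.id : X →ₗ[A] X)) with hK
    have hKmem : ∀ z : X, z ∈ K ↔ x ^ c • z = 0 := by
      intro z; simp [hK]
    set V := X ⧸ K with hV
    have hVdc : IsDerivedComplete x V := DC.quotient_torsionKer c hX
    have hdivV : ∀ v : V, ∃ w : V, x ^ n • v = x ^ (n+1) • w := by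
      intro v
      obtain ⟨m, rfl⟩ := Submodule.Quotient.mk_surjective K v
      obtain ⟨u, hu⟩ := hcn m
      refine ⟨Submodule.Quotient.mk u, ?_⟩
      rw [← Submodule.Quotient.mk_smul, ← Submodule.Quotient.mk_smul,
        ← sub_eq_zero, ← Submodule.Quotient.mk_sub, Submodule.Quotient.mk_eq_zero, hKmem]
      exact hu
    set W := LinearMap.range ((x ^ n) • (LinearMap.id : V →ₗ[A] V)) with hWdef
    have hWmem : ∀ v : V, x ^ n • v ∈ W := by
      intro v; exact ⟨v, by simp [hWdef]⟩
    have hQbd : ∀ q : V ⧸ W, x ^ n • q = 0 := by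
      intro q
      obtain ⟨v, rfl⟩ := Submodule.Quotient.mk_surjective W q
      rw [← Submodule.Quotient.mk_smul, Submodule.Quotient.mk_eq_zero]
      exact hWmem v
    have hQdc : IsDerivedComplete x (V ⧸ W) := DC.of_bounded n hQbd
    have hWdc : IsDerivedComplete x ↥W := DC.submodule hVdc W hQdc.1
    have hdivW : ∀ ω : ↥W, ∃ ω' : ↥W, ω = x • ω' := by
      rintro ⟨_, v, rfl⟩
      obtain ⟨w, hw⟩ := hdivV v
      refine ⟨⟨x ^ n • w, hWmem w⟩, ?_⟩
      ext
      show (x ^ n • LinearMap.id) v = x • x ^ n • w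
      simp only [LinearMap.smul_apply, LinearMap.id_apply]
      rw [hw, smul_smul, ← pow_succ']
    have hWzero := DC.nakayama_principal hWdc.1 hdivW
    refine ⟨c + n, fun m => ?_⟩
    have : x ^ n • (Submodule.Quotient.mk (p := K) m) = 0 := by
      have := hWzero ⟨x ^ n • Submodule.Quotient.mk m, hWmem _⟩
      simpa using congrArg (Subtype.val) this
    rw [← Submodule.Quotient.mk_smul, Submodule.Quotient.mk_eq_zero, hKmem] at this
    rw [pow_add, mul_smul]
    exact this
  · -- unbounded case: contradiction with surjectivity
    push_neg at h1
    have h2 : ∀ n : ℕ, ∃ m : X, ∀ u : X, x ^ n • (x ^ n • m - x ^ (n+1) • u) ≠ 0 := fun n => h1 n n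
    choose uF huF using h2
    set step : ℕ → X → X := fun n S =>
      if h : ∃ v, x ^ n • (S - x ^ n • v) = 0 then uF n - h.choose else 0 with hstep
    set S : ℕ → X := fun n => Nat.rec (0 : X) (fun n Sn => Sn + x ^ n • step n Sn) n with hS
    have hSsucc : ∀ n, S (n+1) = S n + x ^ n • step n (S n) := fun n => rfl
    obtain ⟨y, hy⟩ := hX.2 (fun n => step n (S n))
    have hyn : ∀ n, y n = step n (S n) + x • y (n+1) := by
      intro n
      have := congrFun hy n
      simp only [derivedCompletionPhi] at this
      rw [← this]; abel
    have R1 : ∀ n, y 0 = S n + x ^ n • y n := by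
      intro n
      induction n with
      | zero => simp [hS]
      | succ k ihk =>
        rw [ihk, hyn k, hSsucc k]
        rw [smul_add, smul_smul, ← pow_succ]
        abel
    obtain ⟨c, hc⟩ := htor (y 0)
    exfalso
    have hP : ∃ v, x ^ c • (S c - x ^ c • v) = 0 := by
      refine ⟨-y c, ?_⟩
      have : S c - x ^ c • (-y c) = y 0 := by
        rw [R1 c, smul_neg, sub_neg_eq_add]
      rw [this, hc]
    have hstepc : step c (S c) = uF c - hP.choose := by
      rw [hstep]; simp only [dif_pos hP]
    have hv : x ^ c • (S c - x ^ c • hP.choose) = 0 := hP.choose_spec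
    have e1 : x ^ c • S (c+1) + x ^ c • x ^ (c+1) • y (c+1) = 0 := by
      have h0 : x ^ c • y 0 = 0 := hc
      rw [R1 (c+1), smul_add] at h0
      exact h0
    have hv' : x ^ c • S c = x ^ c • x ^ c • hP.choose := by
      have h := hv
      rw [smul_sub, sub_eq_zero] at h
      exact h
    have e2 : x ^ c • S (c+1) = x ^ c • x ^ c • uF c := by
      rw [hSsucc c, hstepc, smul_add, hv']
      have expand : x ^ c • (x ^ c • (uF c - hP.choose))
          = x ^ c • x ^ c • uF c - x ^ c • x ^ c • hP.choose := by
        rw [smul_sub, smul_sub]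
      rw [expand]
      abel
    refine huF c (-y (c+1)) ?_
    have : x ^ c • (x ^ c • uF c - x ^ (c+1) • (-y (c+1)))
        = x ^ c • x ^ c • uF c + x ^ c • x ^ (c+1) • y (c+1) := by
      rw [smul_neg, sub_neg_eq_add, smul_add]
    rw [this, ← e2, e1]

end Torsion

section Main

variable {A : Type u} [CommRing A]

theorem DC.leqFG_iff {J : Ideal A} {X : Type v} [AddCommGroup X] [Module A X] :
    IsLeqFinitelyGenerated J X ↔
      ∀ a ∈ J, ∃ N : Submodule A X, N.FG ∧ ∀ m : X, a • m ∈ N := by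
  constructor
  · intro h a ha
    obtain ⟨F, _, _, hfin, f, g, hgf⟩ := h a ha
    refine ⟨Submodule.map g ⊤, Submodule.FG.map g (Module.finite_def.mp hfin), fun m => ?_⟩
    have : a • m = g (f m) := by
      have := congrArg (fun φ => φ m) hgf
      simpa using this.symm
    rw [this]
    exact ⟨f m, Submodule.mem_top, rfl⟩
  · intro h a ha
    obtain ⟨N, hfg, hmem⟩ := h a ha
    refine ⟨↥N, inferInstance, inferInstance, Module.Finite.iff_fg.mpr hfg,
      LinearMap.codRestrict N (a • LinearMap.id) (fun m => by simpa using hmem m),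
      N.subtype, ?_⟩
    ext m
    simp

theorem DC.two_implies_three (I : Ideal A) {X : Type v} [AddCommGroup X] [Module A X]
    (r : ℕ) (h2 : IsLeqFinitelyGenerated (I ^ r) X) (n : ℕ) :
    IsLeqFinitelyGenerated (I ^ r) (X ⧸ (I ^ n • (⊤ : Submodule A X))) := by
  intro a ha
  obtain ⟨F, _, _, hfin, f, g, hgf⟩ := h2 a ha
  have hle : ∀ {Y Z : Type v} [AddCommGroup Y] [Module A Y] [AddCommGroup Z] [Module A Z]
      (φ : Y →ₗ[A] Z), I ^ n • (⊤ : Submodule A Y) ≤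
        Submodule.comap φ (I ^ n • (⊤ : Submodule A Z)) := by
    intro Y Z _ _ _ _ φ
    rw [← Submodule.map_le_iff_le_comap, Submodule.map_smul'']
    exact smul_mono_right _ le_top
  refine ⟨F ⧸ (I ^ n • (⊤ : Submodule A F)), inferInstance, inferInstance,
    Module.Finite.of_surjective (Submodule.mkQ _) (Submodule.Quotient.mk_surjective _),
    Submodule.mapQ _ _ f (hle f), Submodule.mapQ _ _ g (hle g), ?_⟩
  apply Submodule.linearMap_qext
  ext m
  simp only [LinearMap.comp_apply, Submodule.mkQ_apply, Submodule.mapQ_apply,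
    LinearMap.smul_apply, LinearMap.id_apply]
  rw [show g (f m) = a • m from by simpa using congrArg (fun φ => φ m) hgf]
  rw [Submodule.Quotient.mk_smul]

theorem DC.three_implies_two (I : Ideal A) (hI : I.FG) {X : Type v} [AddCommGroup X]
    [Module A X] (hA : ∀ x ∈ I, IsDerivedComplete x A) (hX : ∀ x ∈ I, IsDerivedComplete x X)
    (r : ℕ)
    (h3 : IsLeqFinitelyGenerated (I ^ r) (X ⧸ (I ^ (r+1) • (⊤ : Submodule A X)))) :
    IsLeqFinitelyGenerated (I ^ r) X := by
  classical
  set K := I ^ (r+1) • (⊤ : Submodule A X) with hKdef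
  -- lift finitely generated submodules of the quotient
  have lift_fg : ∀ N : Submodule A (X ⧸ K), N.FG →
      ∃ P : Submodule A X, P.FG ∧ Submodule.map K.mkQ P = N := by
    intro N hN
    obtain ⟨G, hG⟩ := hN
    have hsurj := Submodule.Quotient.mk_surjective K
    set l : (X ⧸ K) → X := Function.surjInv hsurj with hl
    refine ⟨Submodule.span A (l '' ↑G), Submodule.fg_span ((G.finite_toSet).image l), ?_⟩
    rw [← Submodule.span_image, Set.image_image]
    have : ∀ q : X ⧸ K, K.mkQ (l q) = q := fun q => Function.surjInv_eq hsurj q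
    rw [show (fun q => K.mkQ (l q)) '' ↑G = ↑G from by
      ext z; simp only [Set.mem_image]
      constructor
      · rintro ⟨q, hq, rfl⟩; rwa [this q]
      · intro hz; exact ⟨z, hz, this z⟩]
    exact hG
  -- generators of I ^ r
  obtain ⟨B, hB⟩ := Submodule.FG.pow hI r
  have h3' := DC.leqFG_iff.mp h3
  have hchoice : ∀ b ∈ B, ∃ P : Submodule A X, P.FG ∧
      ∀ m : X, b • m ∈ P ⊔ K := by
    intro b hb
    have hbIr : b ∈ I ^ r := by
      rw [← hB]; exact Submodule.subset_span hb
    obtain ⟨N, hNfg, hNmem⟩ := h3' b hbIr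
    obtain ⟨P, hPfg, hPmap⟩ := lift_fg N hNfg
    refine ⟨P, hPfg, fun m => ?_⟩
    have : b • (Submodule.Quotient.mk (p := K) m) ∈ N := hNmem _
    rw [← hPmap] at this
    obtain ⟨p, hp, hpe⟩ := this
    have : b • m - p ∈ K := by
      rw [← Submodule.Quotient.mk_eq_zero, Submodule.Quotient.mk_sub]
      rw [show Submodule.Quotient.mk (p := K) p = K.mkQ p from rfl, hpe,
        Submodule.Quotient.mk_smul, sub_self]
    have hdecomp : b • m = p + (b • m - p) := by abel
    rw [hdecomp]
    exact Submodule.add_mem_sup hp this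
  choose! P hPfg hPmem using hchoice
  set NN : Submodule A X := ⨆ b ∈ B, P b with hNN
  have hNNfg : NN.FG := Submodule.fg_biSup B P (fun b hb => hPfg b hb)
  -- I^r • ⊤ ≤ NN ⊔ K
  have hkey : I ^ r • (⊤ : Submodule A X) ≤ NN ⊔ K := by
    rw [Submodule.smul_le]
    intro a ha m _
    rw [← hB] at ha
    induction ha using Submodule.span_induction with
    | mem b hb =>
      have := hPmem b hb m
      have hPle : P b ≤ NN := le_biSup _ hb
      exact sup_le_sup_left (le_refl K) _ <| (sup_le_sup_right hPle K) this
    | zero => rw [zero_smul]; exact Submodule.zero_mem _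
    | add a1 a2 _ _ ih1 ih2 => rw [add_smul]; exact Submodule.add_mem _ ih1 ih2
    | smul c a1 _ ih => rw [smul_eq_mul, mul_smul]; exact Submodule.smul_mem _ _ ih
  -- pass to the quotient by NN
  set Pq := X ⧸ NN with hPq
  have hPdc : ∀ t ∈ I, IsDerivedComplete t Pq := fun t ht =>
    DC.quotient_fg (hA t ht) (hX t ht) NN hNNfg
  set W : Submodule A Pq := I ^ r • ⊤ with hW
  have hWeq : W = Submodule.map NN.mkQ (I ^ r • ⊤) := by
    rw [Submodule.map_smul'', Submodule.map_top, Submodule.range_mkQ]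
  have hWle : W ≤ I • W := by
    rw [hWeq]
    refine le_trans (Submodule.map_mono hkey) ?_
    rw [Submodule.map_sup]
    have h1 : Submodule.map NN.mkQ NN = ⊥ := by
      rw [eq_bot_iff]
      rintro z ⟨n, hn, rfl⟩
      simpa [Submodule.mkQ_apply, Submodule.Quotient.mk_eq_zero] using hn
    have h2 : Submodule.map NN.mkQ K = I ^ (r+1) • ⊤ := by
      rw [hKdef, Submodule.map_smul'', Submodule.map_top, Submodule.range_mkQ]
    rw [h1, h2, bot_sup_eq]
    rw [pow_succ', ← Ideal.smul_eq_mul, Submodule.smul_assoc, ← hWeq]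
  -- Nakayama on W
  obtain ⟨SI, hSI⟩ := hI
  set L := SI.toList with hL
  have hLspan : Ideal.span {a | a ∈ L} = I := by
    rw [← hSI]; congr 1; ext a; simp [hL]
  have hLI : ∀ t ∈ L, t ∈ I := by
    intro t ht
    rw [← hLspan]
    exact Ideal.subset_span ht
  have hWdc : ∀ t ∈ L, IsDerivedComplete t ↥W := by
    intro t ht
    refine DC.submodule (hPdc t (hLI t ht)) W ?_
    refine (DC.of_bounded r ?_).1
    intro q
    obtain ⟨p, rfl⟩ := Submodule.Quotient.mk_surjective W q
    rw [← Submodule.Quotient.mk_smul, Submodule.Quotient.mk_eq_zero]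
    exact Submodule.smul_mem_smul (Ideal.pow_mem_pow (hLI t ht) r) Submodule.mem_top
  have hWtop : (⊤ : Submodule A ↥W) ≤ (Ideal.span {a | a ∈ L}) • ⊤ := by
    rw [hLspan]
    intro ω _
    have h1 : (ω : Pq) ∈ I • W := hWle ω.2
    have h2 : I • W = Submodule.map W.subtype (I • ⊤) := by
      rw [Submodule.map_smul'', Submodule.map_subtype_top]
    rw [h2] at h1
    obtain ⟨ω', hω', hωe⟩ := h1
    have : ω = ω' := by
      ext; exact hωe.symm
    rw [this]
    exact hω'
  have hWzero := DC.nakayama_list L hWdc hWtop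
  -- conclude
  rw [DC.leqFG_iff]
  intro a ha
  refine ⟨NN, hNNfg, fun m => ?_⟩
  have : a • (Submodule.Quotient.mk (p := NN) m) ∈ W :=
    Submodule.smul_mem_smul ha Submodule.mem_top
  have hz := hWzero ⟨_, this⟩
  have : a • (Submodule.Quotient.mk (p := NN) m) = 0 := by
    simpa using congrArg Subtype.val hz
  rwa [← Submodule.Quotient.mk_smul, Submodule.Quotient.mk_eq_zero] at this

end Main

section Loc

variable {A : Type u} [CommRing A]

theorem DC.two_implies_one (I : Ideal A) {X : Type v} [AddCommGroup X] [Module A X]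
    {r : ℕ} (h2 : IsLeqFinitelyGenerated (I ^ r) X) {t : A} (ht : t ∈ I) :
    Module.Finite (Localization.Away t) (LocalizedModule (Submonoid.powers t) X) := by
  obtain ⟨N, hNfg, hNmem⟩ := DC.leqFG_iff.mp h2 (t ^ r) (Ideal.pow_mem_pow ht r)
  obtain ⟨s, hsfin, hsspan⟩ := Submodule.fg_def.mp hNfg
  have htop : (Submodule.span A s).localized' (Localization.Away t) (Submonoid.powers t)
      (LocalizedModule.mkLinearMap (Submonoid.powers t) X) = ⊤ := by
    rw [hsspan, eq_top_iff]
    intro z _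
    obtain ⟨⟨m, u⟩, hmu⟩ := IsLocalizedModule.mk'_surjective (Submonoid.powers t)
      (LocalizedModule.mkLinearMap (Submonoid.powers t) X) z
    simp only [Function.uncurry] at hmu
    rw [Submodule.mem_localized']
    have htr : t ^ r ∈ Submonoid.powers t := ⟨r, rfl⟩
    refine ⟨t ^ r • m, hNmem m, (⟨t ^ r, htr⟩ : Submonoid.powers t) * u, ?_⟩
    rw [show (t ^ r • m) = ((⟨t ^ r, htr⟩ : Submonoid.powers t) • m) from rfl,
      IsLocalizedModule.mk'_cancel_left (f := LocalizedModule.mkLinearMap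
        (Submonoid.powers t) X) m ⟨t ^ r, htr⟩ u]
    exact hmu
  have hfspan : Submodule.span (Localization.Away t)
      ((LocalizedModule.mkLinearMap (Submonoid.powers t) X) '' s) = ⊤ := by
    rw [← Submodule.localized'_span (Localization.Away t) (Submonoid.powers t)
      (LocalizedModule.mkLinearMap (Submonoid.powers t) X) s]
    exact htop
  exact Module.finite_def.mpr (Submodule.fg_def.mpr ⟨_, hsfin.image _, hfspan⟩)

theorem DC.loc_fg_submodule {X : Type v} [AddCommGroup X] [Module A X] (t : A)
    (hfin : Module.Finite (Localization.Away t) (LocalizedModule (Submonoid.powers t) X)) :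
    ∃ N : Submodule A X, N.FG ∧ ∀ m : X, ∃ n : ℕ, t ^ n • m ∈ N := by
  classical
  obtain ⟨G, hG⟩ := Module.finite_def.mp hfin
  have hsurj : ∀ z : LocalizedModule (Submonoid.powers t) X, ∃ mp : X × (Submonoid.powers t),
      IsLocalizedModule.mk' (LocalizedModule.mkLinearMap (Submonoid.powers t) X)
        mp.1 mp.2 = z := by
    intro z
    obtain ⟨mp, hmp⟩ := IsLocalizedModule.mk'_surjective (Submonoid.powers t)
      (LocalizedModule.mkLinearMap (Submonoid.powers t) X) z
    exact ⟨mp, hmp⟩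
  choose φ hφ using hsurj
  refine ⟨Submodule.span A ((fun z => (φ z).1) '' ↑G),
    Submodule.fg_span ((G.finite_toSet).image _), ?_⟩
  have hloc : (⊤ : Submodule (Localization.Away t) (LocalizedModule (Submonoid.powers t) X))
      ≤ (Submodule.span A ((fun z => (φ z).1) '' ↑G)).localized' (Localization.Away t)
        (Submonoid.powers t) (LocalizedModule.mkLinearMap (Submonoid.powers t) X) := by
    rw [← hG, Submodule.span_le]
    intro g hg
    rw [SetLike.mem_coe, Submodule.mem_localized']
    exact ⟨(φ g).1, Submodule.subset_span ⟨g, hg, rfl⟩, (φ g).2, hφ g⟩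
  intro m
  have hmm : (LocalizedModule.mkLinearMap (Submonoid.powers t) X) m
      ∈ (Submodule.span A ((fun z => (φ z).1) '' ↑G)).localized' (Localization.Away t)
        (Submonoid.powers t) (LocalizedModule.mkLinearMap (Submonoid.powers t) X) :=
    hloc Submodule.mem_top
  rw [Submodule.mem_localized'] at hmm
  obtain ⟨w, hw, u, huw⟩ := hmm
  have heq : IsLocalizedModule.mk' (LocalizedModule.mkLinearMap (Submonoid.powers t) X) w u
      = IsLocalizedModule.mk' (LocalizedModule.mkLinearMap (Submonoid.powers t) X) m
        (1 : Submonoid.powers t) := by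
    rw [IsLocalizedModule.mk'_one]
    exact huw
  rw [IsLocalizedModule.mk'_eq_mk'_iff] at heq
  obtain ⟨c, hc⟩ := heq
  have hc' : ((c * u : Submonoid.powers t) : A) • m = (c : A) • w := by
    rw [one_smul] at hc
    rw [Submonoid.smul_def, Submonoid.smul_def, Submonoid.smul_def] at hc
    rw [Submonoid.coe_mul, mul_smul]
    exact hc
  obtain ⟨n, hn⟩ := (c * u).2
  refine ⟨n, ?_⟩
  rw [show (t ^ n : A) = ((c * u : Submonoid.powers t) : A) from hn, hc']
  exact Submodule.smul_mem _ _ hw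

theorem DC.one_implies_two (I : Ideal A) (hI : I.FG) {X : Type v} [AddCommGroup X]
    [Module A X] (hA : ∀ x ∈ I, IsDerivedComplete x A) (hX : ∀ x ∈ I, IsDerivedComplete x X)
    (h1 : ∀ t ∈ I, Module.Finite (Localization.Away t)
      (LocalizedModule (Submonoid.powers t) X)) :
    ∃ r : ℕ, 1 ≤ r ∧ IsLeqFinitelyGenerated (I ^ r) X := by
  classical
  obtain ⟨SI, hSI⟩ := hI
  have hSImem : ∀ t ∈ SI, t ∈ I := fun t ht => by
    rw [← hSI]; exact Submodule.subset_span ht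
  have hNt : ∀ t ∈ SI, ∃ N : Submodule A X, N.FG ∧ ∀ m : X, ∃ n : ℕ, t ^ n • m ∈ N :=
    fun t ht => DC.loc_fg_submodule t (h1 t (hSImem t ht))
  choose! Nt hNtfg hNtmem using hNt
  have hNfg : (⨆ t ∈ SI, Nt t).FG := Submodule.fg_biSup SI Nt (fun t ht => hNtfg t ht)
  have hCdc : ∀ x ∈ I, IsDerivedComplete x (X ⧸ (⨆ t ∈ SI, Nt t)) := fun x hx =>
    DC.quotient_fg (hA x hx) (hX x hx) _ hNfg
  have hCtor : ∀ t ∈ SI, ∀ q : X ⧸ (⨆ t ∈ SI, Nt t), ∃ n, t ^ n • q = 0 := by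
    intro t ht q
    obtain ⟨m, rfl⟩ := Submodule.Quotient.mk_surjective _ q
    obtain ⟨n, hn⟩ := hNtmem t ht m
    refine ⟨n, ?_⟩
    rw [← Submodule.Quotient.mk_smul, Submodule.Quotient.mk_eq_zero]
    exact (le_biSup Nt ht : Nt t ≤ _) hn
  have hbd : ∀ t ∈ SI, ∃ c, ∀ q : X ⧸ (⨆ t ∈ SI, Nt t), t ^ c • q = 0 := fun t ht =>
    DC.torsion_bounded (hCdc t (hSImem t ht)) (hCtor t ht)
  have hrad : I ≤ (Module.annihilator A (X ⧸ (⨆ t ∈ SI, Nt t))).radical := by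
    rw [← hSI, Ideal.span_le]
    intro t ht
    obtain ⟨c, hc⟩ := hbd t ht
    exact ⟨c, Module.mem_annihilator.mpr hc⟩
  obtain ⟨n, hn⟩ := Ideal.exists_pow_le_of_le_radical_of_fg hrad ⟨SI, hSI⟩
  refine ⟨n + 1, Nat.le_add_left 1 n, DC.leqFG_iff.mpr fun a ha => ?_⟩
  refine ⟨_, hNfg, fun m => ?_⟩
  have haann : a ∈ Module.annihilator A (X ⧸ (⨆ t ∈ SI, Nt t)) :=
    hn (Ideal.pow_le_pow_right (Nat.le_succ n) ha)
  have hz : a • (Submodule.Quotient.mk (p := ⨆ t ∈ SI, Nt t) m) = 0 :=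
    Module.mem_annihilator.mp haann _
  rwa [← Submodule.Quotient.mk_smul, Submodule.Quotient.mk_eq_zero] at hz

end Loc


/-- Proposition 2.26: over a derived `I`-complete ring `A` (with `I` finitely generated), for a
derived `I`-complete module `M` the conditions (1) `M` is finitely generated outside `I`;
(2) `M` is `≤I^r`-finitely generated for some `r ≥ 1`; (3) `M/I^n M` is `≤I^r`-finitely
generated for some `r ≥ 1` and all `n ≥ 1`, are equivalent; moreover, for each fixed `r ≥ 1`,
(2) holds with exponent `r` if and only if (3) holds with exponent `r`. -/
theorem stmt2 {A : Type u} [CommRing A] (I : Ideal A) (hI : I.FG)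
    (hA : ∀ x ∈ I, IsDerivedComplete x A)
    (M : Type u) [AddCommGroup M] [Module A M]
    (hM : ∀ x ∈ I, IsDerivedComplete x M) :
    (List.TFAE
      [ ∀ t ∈ I, Module.Finite (Localization.Away t)
          (LocalizedModule (Submonoid.powers t) M),
        ∃ r : ℕ, 1 ≤ r ∧ IsLeqFinitelyGenerated (I ^ r) M,
        ∃ r : ℕ, 1 ≤ r ∧ ∀ n : ℕ, 1 ≤ n →
          IsLeqFinitelyGenerated (I ^ r) (M ⧸ (I ^ n • (⊤ : Submodule A M))) ]) ∧
    (∀ r : ℕ, 1 ≤ r →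
      (IsLeqFinitelyGenerated (I ^ r) M ↔
        ∀ n : ℕ, 1 ≤ n →
          IsLeqFinitelyGenerated (I ^ r) (M ⧸ (I ^ n • (⊤ : Submodule A M))))) := by
  constructor
  · tfae_have 1 → 2 := fun h1 => DC.one_implies_two I hI hA hM h1
    tfae_have 2 → 3 := fun ⟨r, hr, h2⟩ => ⟨r, hr, fun n _ => DC.two_implies_three I r h2 n⟩
    tfae_have 3 → 2 := fun ⟨r, hr, h3⟩ =>
      ⟨r, hr, DC.three_implies_two I hI hA hM r (h3 (r+1) (by omega))⟩
    tfae_have 2 → 1 := fun ⟨r, hr, h2⟩ t ht => DC.two_implies_one I h2 ht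
    tfae_finish
  · intro r hr
    constructor
    · intro h2 n _
      exact DC.two_implies_three I r h2 n
    · intro h3
      exact DC.three_implies_two I hI hA hM r (h3 (r+1) (by omega))
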